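/- Let V be a finite-dimensional complex vector space with dim V = r and let N₁, N₂, N₃ be norms on V. Then for every j = 1,…,r: λ_j(N₁,N₂) + λ_r(N₂,N₃) ≤ λ_j(N₁,N₃) ≤ λ_j(N₁,N₂) + λ₁(N₂,N₃). -/

import Mathlib

open scoped BigOperators

/-- A norm on a complex vector space, given as a function with the usual axioms. -/
def IsNorm {V : Type*} [AddCommGroup V] [Module ℂ V] (N : V → ℝ) : Prop :=
  (∀ v, 0 ≤ N v) ∧ (∀ v, N v = 0 ↔ v = 0) ∧
  (∀ (c : ℂ) (v : V), N (c • v) = ‖c‖ * N v) ∧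
  (∀ v w, N (v + w) ≤ N v + N w)

/-- The `j`-th element of the logarithmic relative spectrum of `N₁` with respect to `N₂`:
`λ_j(N₁,N₂) = sup_{W ⊆ V, dim W = j} inf_{w ∈ W∖{0}} log (N₂(w)/N₁(w))`. -/
noncomputable def relSpec {V : Type*} [AddCommGroup V] [Module ℂ V]
    (N₁ N₂ : V → ℝ) (j : ℕ) : ℝ :=
  sSup {x : ℝ | ∃ W : Submodule ℂ V, Module.finrank ℂ W = j ∧
    x = sInf {y : ℝ | ∃ w : V, w ∈ W ∧ w ≠ 0 ∧ y = Real.log (N₂ w / N₁ w)}}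

/-! ### Auxiliary material -/

section Aux

variable {V : Type*} [AddCommGroup V] [Module ℂ V]

theorem IsNorm.pos {N : V → ℝ} (h : IsNorm N) {v : V} (hv : v ≠ 0) : 0 < N v :=
  lt_of_le_of_ne (h.1 v) (fun e => hv ((h.2.1 v).mp e.symm))

/-- Type copy to host a second normed structure. -/
def NCopy (V : Type*) := V

instance : AddCommGroup (NCopy V) := inferInstanceAs (AddCommGroup V)
instance : Module ℂ (NCopy V) := inferInstanceAs (Module ℂ V)
instance [FiniteDimensional ℂ V] : FiniteDimensional ℂ (NCopy V) :=
  inferInstanceAs (FiniteDimensional ℂ V)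

@[reducible] noncomputable def IsNorm.toNAG {N : V → ℝ} (h : IsNorm N) : NormedAddCommGroup V :=
  AddGroupNorm.toNormedAddCommGroup
    { toFun := N
      map_zero' := (h.2.1 0).mpr rfl
      add_le' := h.2.2.2
      neg' := fun v => by
        have := h.2.2.1 (-1) v
        simpa using this
      eq_zero_of_map_eq_zero' := fun v hv => (h.2.1 v).mp hv }

theorem IsNorm.exists_bound [FiniteDimensional ℂ V]
    {N M : V → ℝ} (hN : IsNorm N) (hM : IsNorm M) :
    ∃ C : ℝ, 0 < C ∧ ∀ v, M v ≤ C * N v := by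
  letI i1 : NormedAddCommGroup V := hN.toNAG
  letI : NormedSpace ℂ V := ⟨fun c v => by
    show N (c • v) ≤ ‖c‖ * N v
    rw [hN.2.2.1 c v]⟩
  letI i2 : NormedAddCommGroup (NCopy V) := (show IsNorm (V := NCopy V) M from hM).toNAG
  letI : NormedSpace ℂ (NCopy V) := ⟨fun c v => by
    show M (c • v) ≤ ‖c‖ * M v
    exact (hM.2.2.1 c v).le⟩
  let f : V →ₗ[ℂ] NCopy V := LinearMap.id
  let g := LinearMap.toContinuousLinearMap f
  refine ⟨‖g‖ + 1, by positivity, fun v => ?_⟩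
  have h1 : M v = ‖g v‖ := rfl
  have h2 : N v = ‖v‖ := rfl
  have := g.le_opNorm v
  rw [h1, h2]
  nlinarith [norm_nonneg v, norm_nonneg g]

theorem IsNorm.exists_log_bounds [FiniteDimensional ℂ V]
    {N M : V → ℝ} (hN : IsNorm N) (hM : IsNorm M) :
    ∃ L U : ℝ, ∀ v : V, v ≠ 0 →
      L ≤ Real.log (M v / N v) ∧ Real.log (M v / N v) ≤ U := by
  obtain ⟨C, hC, hCb⟩ := hN.exists_bound hM
  obtain ⟨c, hc, hcb⟩ := hM.exists_bound hN
  refine ⟨Real.log c⁻¹, Real.log C, fun v hv => ?_⟩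
  have hNv := hN.pos hv
  have hMv := hM.pos hv
  constructor
  · apply Real.log_le_log (by positivity)
    rw [le_div_iff₀ hNv]
    have h1 : c⁻¹ * N v ≤ c⁻¹ * (c * M v) :=
      mul_le_mul_of_nonneg_left (hcb v) (by positivity)
    have h2 : c⁻¹ * (c * M v) = M v := by field_simp
    linarith
  · apply Real.log_le_log (by positivity)
    rw [div_le_iff₀ hNv]
    calc M v ≤ C * N v := hCb v
      _ = C * N v := rfl
  -- second bound done

/-- The inner set appearing in `relSpec`. -/
def specSet (N M : V → ℝ) (W : Submodule ℂ V) : Set ℝ :=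
  {y : ℝ | ∃ w : V, w ∈ W ∧ w ≠ 0 ∧ y = Real.log (M w / N w)}

theorem relSpec_def (N M : V → ℝ) (j : ℕ) :
    relSpec N M j = sSup {x : ℝ | ∃ W : Submodule ℂ V,
      Module.finrank ℂ W = j ∧ x = sInf (specSet N M W)} := rfl

variable {N M : V → ℝ} {L U : ℝ}

theorem specSet_bddBelow
    (hb : ∀ v : V, v ≠ 0 → L ≤ Real.log (M v / N v) ∧ Real.log (M v / N v) ≤ U)
    (W : Submodule ℂ V) : BddBelow (specSet N M W) := by
  refine ⟨L, ?_⟩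
  rintro y ⟨w, hw, h0, rfl⟩
  exact (hb w h0).1

theorem specSet_bddAbove
    (hb : ∀ v : V, v ≠ 0 → L ≤ Real.log (M v / N v) ∧ Real.log (M v / N v) ≤ U)
    (W : Submodule ℂ V) : BddAbove (specSet N M W) := by
  refine ⟨U, ?_⟩
  rintro y ⟨w, hw, h0, rfl⟩
  exact (hb w h0).2

theorem specSet_nonempty {W : Submodule ℂ V} (hW : W ≠ ⊥) : (specSet N M W).Nonempty := by
  obtain ⟨w, hwW, hw0⟩ := Submodule.exists_mem_ne_zero_of_ne_bot hW
  exact ⟨Real.log (M w / N w), w, hwW, hw0, rfl⟩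

theorem ne_bot_of_finrank {W : Submodule ℂ V} {j : ℕ} (hj : 1 ≤ j)
    (hW : Module.finrank ℂ W = j) : W ≠ ⊥ := by
  rintro rfl
  rw [finrank_bot] at hW
  omega

theorem sInf_specSet_le
    (hb : ∀ v : V, v ≠ 0 → L ≤ Real.log (M v / N v) ∧ Real.log (M v / N v) ≤ U)
    {W : Submodule ℂ V} (hW : W ≠ ⊥) : sInf (specSet N M W) ≤ U := by
  obtain ⟨w, hwW, hw0⟩ := Submodule.exists_mem_ne_zero_of_ne_bot hW
  exact le_trans (csInf_le (specSet_bddBelow hb W) ⟨w, hwW, hw0, rfl⟩) (hb w hw0).2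

theorem TSet_bddAbove
    (hb : ∀ v : V, v ≠ 0 → L ≤ Real.log (M v / N v) ∧ Real.log (M v / N v) ≤ U)
    {j : ℕ} (hj : 1 ≤ j) :
    BddAbove {x : ℝ | ∃ W : Submodule ℂ V,
      Module.finrank ℂ W = j ∧ x = sInf (specSet N M W)} := by
  refine ⟨U, ?_⟩
  rintro x ⟨W, hW, rfl⟩
  exact sInf_specSet_le hb (ne_bot_of_finrank hj hW)

theorem TSet_nonempty [FiniteDimensional ℂ V] {j : ℕ} (hj : j ≤ Module.finrank ℂ V) :
    Set.Nonempty {x : ℝ | ∃ W : Submodule ℂ V,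
      Module.finrank ℂ W = j ∧ x = sInf (specSet N M W)} := by
  obtain ⟨f, hf⟩ := exists_linearIndependent_of_le_finrank hj
  exact ⟨_, ⟨Submodule.span ℂ (Set.range f),
    by rw [finrank_span_eq_card hf]; simp, rfl⟩⟩

/-- At level `r = dim V`, the relative spectrum is the infimum over the whole space. -/
theorem relSpec_top [FiniteDimensional ℂ V] :
    relSpec N M (Module.finrank ℂ V) = sInf (specSet N M (⊤ : Submodule ℂ V)) := by
  rw [relSpec_def]
  have : {x : ℝ | ∃ W : Submodule ℂ V,
      Module.finrank ℂ W = Module.finrank ℂ V ∧ x = sInf (specSet N M W)}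
      = {sInf (specSet N M (⊤ : Submodule ℂ V))} := by
    ext x
    simp only [Set.mem_setOf_eq, Set.mem_singleton_iff]
    constructor
    · rintro ⟨W, hW, rfl⟩
      rw [Submodule.eq_top_of_finrank_eq hW]
    · rintro rfl
      exact ⟨⊤, finrank_top ℂ V, rfl⟩
  rw [this, csSup_singleton]

/-- Every value `log (M w / N w)` at a nonzero vector is at most `λ₁(N, M)`. -/
theorem log_le_relSpec_one
    (hb : ∀ v : V, v ≠ 0 → L ≤ Real.log (M v / N v) ∧ Real.log (M v / N v) ≤ U)
    (hN : IsNorm N) (hM : IsNorm M) {w : V} (hw : w ≠ 0) :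
    Real.log (M w / N w) ≤ relSpec N M 1 := by
  have hspan : specSet N M (Submodule.span ℂ {w}) = {Real.log (M w / N w)} := by
    ext y
    simp only [specSet, Set.mem_setOf_eq, Set.mem_singleton_iff]
    constructor
    · rintro ⟨u, hu, hu0, rfl⟩
      rw [Submodule.mem_span_singleton] at hu
      obtain ⟨a, rfl⟩ := hu
      have ha : a ≠ 0 := by rintro rfl; simp at hu0
      have ha' : (‖a‖ : ℝ) ≠ 0 := by simpa using ha
      rw [hM.2.2.1, hN.2.2.1, mul_div_mul_left _ _ ha']
    · rintro rfl
      exact ⟨w, Submodule.mem_span_singleton_self w, hw, rfl⟩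
  rw [relSpec_def]
  apply le_csSup (TSet_bddAbove hb le_rfl)
  exact ⟨Submodule.span ℂ {w}, finrank_span_singleton hw, by rw [hspan, csInf_singleton]⟩

end Aux

theorem log_split {V : Type*} [AddCommGroup V] [Module ℂ V] {N₁ N₂ N₃ : V → ℝ}
    (h1 : IsNorm N₁) (h2 : IsNorm N₂) (h3 : IsNorm N₃) {w : V} (hw : w ≠ 0) :
    Real.log (N₃ w / N₁ w) = Real.log (N₂ w / N₁ w) + Real.log (N₃ w / N₂ w) := by
  rw [Real.log_div (h3.pos hw).ne' (h1.pos hw).ne',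
    Real.log_div (h2.pos hw).ne' (h1.pos hw).ne',
    Real.log_div (h3.pos hw).ne' (h2.pos hw).ne']
  ring

/-- Subadditivity-type estimates for the logarithmic relative spectrum: for any three
norms `N₁, N₂, N₃` on an `r`-dimensional complex vector space and `j = 1,…,r`,
`λ_j(N₁,N₂) + λ_r(N₂,N₃) ≤ λ_j(N₁,N₃) ≤ λ_j(N₁,N₂) + λ₁(N₂,N₃)`. -/
theorem relSpec_triangle
    {V : Type*} [AddCommGroup V] [Module ℂ V] [FiniteDimensional ℂ V]
    (N₁ N₂ N₃ : V → ℝ) (h1 : IsNorm N₁) (h2 : IsNorm N₂) (h3 : IsNorm N₃)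
    (j : ℕ) (hj1 : 1 ≤ j) (hj2 : j ≤ Module.finrank ℂ V) :
    relSpec N₁ N₂ j + relSpec N₂ N₃ (Module.finrank ℂ V) ≤ relSpec N₁ N₃ j ∧
    relSpec N₁ N₃ j ≤ relSpec N₁ N₂ j + relSpec N₂ N₃ 1 := by
  obtain ⟨L12, U12, hb12⟩ := h1.exists_log_bounds h2
  obtain ⟨L13, U13, hb13⟩ := h1.exists_log_bounds h3
  obtain ⟨L23, U23, hb23⟩ := h2.exists_log_bounds h3
  have hm_le : ∀ w : V, w ≠ 0 →
      sInf (specSet N₂ N₃ (⊤ : Submodule ℂ V)) ≤ Real.log (N₃ w / N₂ w) := fun w hw =>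
    csInf_le (specSet_bddBelow hb23 ⊤) ⟨w, Submodule.mem_top, hw, rfl⟩
  constructor
  · -- left inequality
    rw [relSpec_top (N := N₂) (M := N₃)]
    have key : relSpec N₁ N₂ j ≤ relSpec N₁ N₃ j
        - sInf (specSet N₂ N₃ (⊤ : Submodule ℂ V)) := by
      rw [relSpec_def N₁ N₂]
      apply csSup_le (TSet_nonempty hj2)
      rintro x ⟨W, hW, rfl⟩
      have hWb : W ≠ ⊥ := ne_bot_of_finrank hj1 hW
      have step : sInf (specSet N₁ N₂ W) + sInf (specSet N₂ N₃ (⊤ : Submodule ℂ V))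
          ≤ sInf (specSet N₁ N₃ W) := by
        apply le_csInf (specSet_nonempty hWb)
        rintro y ⟨w, hwW, hw0, rfl⟩
        have e := log_split h1 h2 h3 hw0
        have i1 : sInf (specSet N₁ N₂ W) ≤ Real.log (N₂ w / N₁ w) :=
          csInf_le (specSet_bddBelow hb12 W) ⟨w, hwW, hw0, rfl⟩
        have i2 := hm_le w hw0
        linarith
      have i3 : sInf (specSet N₁ N₃ W) ≤ relSpec N₁ N₃ j := by
        rw [relSpec_def N₁ N₃]
        exact le_csSup (TSet_bddAbove hb13 hj1) ⟨W, hW, rfl⟩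
      linarith
    linarith
  · -- right inequality
    rw [relSpec_def N₁ N₃]
    apply csSup_le (TSet_nonempty hj2)
    rintro x ⟨W, hW, rfl⟩
    have hWb : W ≠ ⊥ := ne_bot_of_finrank hj1 hW
    have claim : sInf (specSet N₁ N₃ W) ≤ sInf (specSet N₁ N₂ W) + relSpec N₂ N₃ 1 := by
      apply le_of_forall_pos_le_add
      intro ε hε
      obtain ⟨y, ⟨w, hwW, hw0, rfl⟩, hy⟩ :=
        exists_lt_of_csInf_lt (specSet_nonempty hWb)
          (lt_add_of_pos_right (sInf (specSet N₁ N₂ W)) hε)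
      have i1 : sInf (specSet N₁ N₃ W) ≤ Real.log (N₃ w / N₁ w) :=
        csInf_le (specSet_bddBelow hb13 W) ⟨w, hwW, hw0, rfl⟩
      have i2 : Real.log (N₃ w / N₂ w) ≤ relSpec N₂ N₃ 1 :=
        log_le_relSpec_one hb23 h2 h3 hw0
      have e := log_split h1 h2 h3 hw0
      linarith
    have i3 : sInf (specSet N₁ N₂ W) ≤ relSpec N₁ N₂ j := by
      rw [relSpec_def N₁ N₂]
      exact le_csSup (TSet_bddAbove hb12 hj1) ⟨W, hW, rfl⟩
    linarith
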